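/- arXiv:2512.19196 — 2 statements merged into one kernel-verified Lean document; each statement's English description precedes it below -/
import Mathlib

section
/- Let Ω ⊆ ℝ^d and let p, p̂ : Ω → ℝ be C¹ densities satisfying p(x) ≥ ε and p̂(x) ≥ ε for all x ∈ Ω (with ε > 0), and suppose ‖∇ log p‖_∞ ≤ M. Then ‖∇ log p̂ − ∇ log p‖_{L²(Ω)} ≤ (1/ε)‖∇(p̂ − p)‖_{L²(Ω)} + (M/ε)‖p̂ − p‖_{L²(Ω)}. -/
open MeasureTheory Real InnerProductSpace

variable {E : Type*} [NormedAddCommGroup E] [InnerProductSpace ℝ E] [CompleteSpace E]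

lemma measurable_gradient' [MeasurableSpace E] [BorelSpace E] (f : E → ℝ) :
    Measurable (fun x => gradient f x) :=
  (LinearIsometryEquiv.continuous _).measurable.comp (measurable_fderiv ℝ f)

lemma gradient_log_of_pos {p : E → ℝ} (hp : ContDiff ℝ 1 p) {x : E} (hx : p x ≠ 0) :
    gradient (fun y => Real.log (p y)) x = (p x)⁻¹ • gradient p x := by
  have h1 : HasFDerivAt p (fderiv ℝ p x) x := (hp.differentiable one_ne_zero x).hasFDerivAt
  have h2 : HasFDerivAt (fun y => Real.log (p y)) ((p x)⁻¹ • fderiv ℝ p x) x := by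
    exact (Real.hasDerivAt_log hx).comp_hasFDerivAt x h1
  show (toDual ℝ E).symm (fderiv ℝ (fun y => Real.log (p y)) x) = _
  rw [h2.fderiv, _root_.map_smul]
  rfl

lemma gradient_sub' {p q : E → ℝ} (hp : ContDiff ℝ 1 p) (hq : ContDiff ℝ 1 q) (x : E) :
    gradient (fun y => p y - q y) x = gradient p x - gradient q x := by
  show (toDual ℝ E).symm (fderiv ℝ (fun y => p y - q y) x) = _
  rw [fderiv_fun_sub (hp.differentiable one_ne_zero x) (hq.differentiable one_ne_zero x), map_sub]
  rfl

/-- Stability of the score function: if `p, p̂ ≥ ε > 0` on `Ω` are `C¹` densities and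
`‖∇ log p‖_∞ ≤ M`, then
`‖∇ log p̂ − ∇ log p‖_{L²(Ω)} ≤ (1/ε) ‖∇(p̂ − p)‖_{L²(Ω)} + (M/ε) ‖p̂ − p‖_{L²(Ω)}`. -/
theorem score_stability {d : ℕ} (Ω : Set (EuclideanSpace ℝ (Fin d)))
    (hΩ : MeasurableSet Ω)
    (p phat : EuclideanSpace ℝ (Fin d) → ℝ)
    (hp : ContDiff ℝ 1 p) (hphat : ContDiff ℝ 1 phat)
    (ε : ℝ) (hε : 0 < ε)
    (hp_lb : ∀ x ∈ Ω, ε ≤ p x) (hphat_lb : ∀ x ∈ Ω, ε ≤ phat x)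
    (M : ℝ) (hM : 0 < M)
    (hscore_bdd : ∀ x ∈ Ω, ‖gradient (fun y => Real.log (p y)) x‖ ≤ M) :
    eLpNorm (fun x => gradient (fun y => Real.log (phat y)) x
        - gradient (fun y => Real.log (p y)) x) 2 (volume.restrict Ω)
      ≤ ENNReal.ofReal (1 / ε) *
          eLpNorm (fun x => gradient (fun y => phat y - p y) x) 2 (volume.restrict Ω)
        + ENNReal.ofReal (M / ε) *
          eLpNorm (fun x => phat x - p x) 2 (volume.restrict Ω) := by
  set G : EuclideanSpace ℝ (Fin d) → EuclideanSpace ℝ (Fin d) :=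
    fun x => gradient (fun y => phat y - p y) x with hG
  set D : EuclideanSpace ℝ (Fin d) → ℝ := fun x => phat x - p x with hD
  set f : EuclideanSpace ℝ (Fin d) → EuclideanSpace ℝ (Fin d) :=
    fun x => gradient (fun y => Real.log (phat y)) x
        - gradient (fun y => Real.log (p y)) x with hf
  -- pointwise bound on Ω
  have key : ∀ x ∈ Ω, ‖f x‖ ≤ (1/ε) * ‖G x‖ + (M/ε) * ‖D x‖ := by
    intro x hx
    have hpx : (0:ℝ) < p x := lt_of_lt_of_le hε (hp_lb x hx)
    have hqx : (0:ℝ) < phat x := lt_of_lt_of_le hε (hphat_lb x hx)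
    have e1 : gradient (fun y => Real.log (p y)) x = (p x)⁻¹ • gradient p x :=
      gradient_log_of_pos hp hpx.ne'
    have e2 : gradient (fun y => Real.log (phat y)) x = (phat x)⁻¹ • gradient phat x :=
      gradient_log_of_pos hphat hqx.ne'
    have eG : G x = gradient phat x - gradient p x := gradient_sub' hphat hp x
    have decomp : f x = (phat x)⁻¹ • G x
        + ((p x - phat x) / phat x) • gradient (fun y => Real.log (p y)) x := by
      show gradient (fun y => Real.log (phat y)) x - gradient (fun y => Real.log (p y)) x = _
      rw [e2, e1, eG]
      have hc : (p x - phat x) / phat x * (p x)⁻¹ = (phat x)⁻¹ - (p x)⁻¹ := by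
        field_simp
      rw [smul_smul, hc, sub_smul, smul_sub]
      abel
    rw [decomp]
    have A : ‖(phat x)⁻¹ • G x‖ ≤ (1/ε) * ‖G x‖ := by
      rw [norm_smul]
      gcongr
      rw [Real.norm_eq_abs, abs_of_pos (inv_pos.mpr hqx), one_div]
      exact inv_anti₀ hε (hphat_lb x hx)
    have h1 : ‖(p x - phat x) / phat x‖ ≤ ‖D x‖ / ε := by
      rw [Real.norm_eq_abs, abs_div, abs_of_pos hqx]
      have hD' : |p x - phat x| = ‖D x‖ := by
        rw [hD, Real.norm_eq_abs, abs_sub_comm]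
      rw [hD']
      exact div_le_div_of_nonneg_left (norm_nonneg _) hε (hphat_lb x hx)
    have B : ‖((p x - phat x) / phat x) • gradient (fun y => Real.log (p y)) x‖
        ≤ (M/ε) * ‖D x‖ := by
      rw [norm_smul]
      calc ‖(p x - phat x) / phat x‖ * ‖gradient (fun y => Real.log (p y)) x‖
          ≤ (‖D x‖ / ε) * M :=
            mul_le_mul h1 (hscore_bdd x hx) (norm_nonneg _) (by positivity)
        _ = M / ε * ‖D x‖ := by ring
    exact (norm_add_le _ _).trans (add_le_add A B)
  -- measurability
  have mG : AEStronglyMeasurable G (volume.restrict Ω) :=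
    (measurable_gradient' _).aestronglyMeasurable
  have mD : AEStronglyMeasurable D (volume.restrict Ω) :=
    ((hphat.continuous.sub hp.continuous).measurable).aestronglyMeasurable
  have h1 : eLpNorm f 2 (volume.restrict Ω)
      ≤ eLpNorm (fun x => (1/ε) * ‖G x‖ + (M/ε) * ‖D x‖) 2 (volume.restrict Ω) := by
    apply eLpNorm_mono_ae
    filter_upwards [ae_restrict_mem hΩ] with x hx
    calc ‖f x‖ ≤ (1/ε) * ‖G x‖ + (M/ε) * ‖D x‖ := key x hx
      _ ≤ ‖(1/ε) * ‖G x‖ + (M/ε) * ‖D x‖‖ := le_abs_self _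
  have h2 : eLpNorm (fun x => (1/ε) * ‖G x‖ + (M/ε) * ‖D x‖) 2 (volume.restrict Ω)
      ≤ eLpNorm (fun x => (1/ε) * ‖G x‖) 2 (volume.restrict Ω)
        + eLpNorm (fun x => (M/ε) * ‖D x‖) 2 (volume.restrict Ω) :=
    eLpNorm_add_le (mG.norm.const_mul _) (mD.norm.const_mul _) one_le_two
  have e3 : eLpNorm (fun x => (1/ε) * ‖G x‖) 2 (volume.restrict Ω)
      = ENNReal.ofReal (1/ε) * eLpNorm G 2 (volume.restrict Ω) := by
    have : (fun x => (1/ε) * ‖G x‖) = (1/ε : ℝ) • (fun x => ‖G x‖) := rfl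
    rw [this, eLpNorm_const_smul, eLpNorm_norm]
    congr 1
    exact Real.enorm_eq_ofReal (by positivity)
  have e4 : eLpNorm (fun x => (M/ε) * ‖D x‖) 2 (volume.restrict Ω)
      = ENNReal.ofReal (M/ε) * eLpNorm D 2 (volume.restrict Ω) := by
    have : (fun x => (M/ε) * ‖D x‖) = (M/ε : ℝ) • (fun x => ‖D x‖) := rfl
    rw [this, eLpNorm_const_smul, eLpNorm_norm]
    congr 1
    exact Real.enorm_eq_ofReal (by positivity)
  calc eLpNorm f 2 (volume.restrict Ω) ≤ _ := h1
    _ ≤ _ := h2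
    _ = _ := by rw [e3, e4]
end

section
/- For univariate Gaussian measures μ = N(m₁, s₁²) and ν = N(m₂, s₂²) with s₁, s₂ > 0, the squared 2-Wasserstein distance equals (m₁ − m₂)² + (s₁ − s₂)². -/
open MeasureTheory ProbabilityTheory ENNReal NNReal

lemma integral_gaussianReal_eq {m : ℝ} {v : ℝ≥0} (hv : v ≠ 0) (f : ℝ → ℝ) :
    ∫ x, f x ∂(gaussianReal m v) = ∫ x, gaussianPDFReal m v x * f x := by
  rw [gaussianReal_of_var_ne_zero _ hv]
  have : (gaussianPDF m v) = fun x => ((Real.toNNReal (gaussianPDFReal m v x) : ℝ≥0) : ℝ≥0∞) :=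
    rfl
  rw [this, integral_withDensity_eq_integral_smul
    (measurable_gaussianPDFReal m v).real_toNNReal f]
  congr 1 with x
  simp [NNReal.smul_def, Real.coe_toNNReal _ (gaussianPDFReal_nonneg m v x)]

lemma integrable_gaussianReal_iff {m : ℝ} {v : ℝ≥0} (hv : v ≠ 0) (f : ℝ → ℝ) :
    Integrable f (gaussianReal m v) ↔
      Integrable (fun x => f x * gaussianPDFReal m v x) volume := by
  rw [gaussianReal_of_var_ne_zero _ hv,
    integrable_withDensity_iff (measurable_gaussianPDF m v)
      (Filter.Eventually.of_forall fun x => ENNReal.ofReal_lt_top)]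
  simp only [gaussianPDF, ENNReal.toReal_ofReal (gaussianPDFReal_nonneg m v _)]

lemma gaussianPDFReal_std (x : ℝ) :
    gaussianPDFReal 0 1 x = (Real.sqrt (2 * Real.pi))⁻¹ * Real.exp (-(2⁻¹ : ℝ) * x ^ 2) := by
  simp only [gaussianPDFReal, NNReal.coe_one, mul_one, sub_zero]
  ring_nf

lemma integrable_sq_mul_exp : Integrable (fun x : ℝ => x ^ 2 * Real.exp (-(2⁻¹ : ℝ) * x ^ 2)) := by
  have := integrable_rpow_mul_exp_neg_mul_sq (b := 2⁻¹) (by norm_num) (s := 2) (by norm_num)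
  convert this using 2 with x
  rw [show ((2:ℝ) : ℝ) = ((2:ℕ) : ℝ) by norm_num, Real.rpow_natCast]

lemma std_integrable_sq : Integrable (fun x : ℝ => x ^ 2) (gaussianReal 0 1) := by
  rw [integrable_gaussianReal_iff one_ne_zero]
  have : (fun x : ℝ => x ^ 2 * gaussianPDFReal 0 1 x)
      = fun x => (Real.sqrt (2 * Real.pi))⁻¹ * (x ^ 2 * Real.exp (-(2⁻¹ : ℝ) * x ^ 2)) := by
    funext x; rw [gaussianPDFReal_std]; ring
  rw [this]
  exact integrable_sq_mul_exp.const_mul _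

lemma std_memL2 : MemLp (id : ℝ → ℝ) 2 (gaussianReal 0 1) := by
  rw [memLp_two_iff_integrable_sq measurable_id.aestronglyMeasurable]
  exact std_integrable_sq

lemma std_mean : ∫ x, x ∂(gaussianReal 0 1) = 0 := by
  rw [integral_gaussianReal_eq one_ne_zero]
  have h : ∫ x : ℝ, gaussianPDFReal 0 1 x * x
      = ∫ x : ℝ, gaussianPDFReal 0 1 (-x) * (-x) :=
    (MeasureTheory.integral_neg_eq_self (fun x : ℝ => gaussianPDFReal 0 1 x * x) volume).symm
  have h2 : (fun x : ℝ => gaussianPDFReal 0 1 (-x) * (-x))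
      = fun x : ℝ => -(gaussianPDFReal 0 1 x * x) := by
    funext x
    simp only [gaussianPDFReal_std, neg_sq]
    ring
  rw [h2, MeasureTheory.integral_neg] at h
  linarith

lemma integral_sq_exp : ∫ x : ℝ, x ^ 2 * Real.exp (-(2⁻¹ : ℝ) * x ^ 2) = Real.sqrt (2 * Real.pi) := by
  have habs : ∫ x : ℝ, x ^ 2 * Real.exp (-(2⁻¹ : ℝ) * x ^ 2)
      = 2 * ∫ x in Set.Ioi (0:ℝ), x ^ 2 * Real.exp (-(2⁻¹ : ℝ) * x ^ 2) := by
    rw [← integral_comp_abs (f := fun x : ℝ => x ^ 2 * Real.exp (-(2⁻¹ : ℝ) * x ^ 2))]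
    congr 1 with x
    rw [sq_abs]
  have hIoi : ∫ x in Set.Ioi (0:ℝ), x ^ 2 * Real.exp (-(2⁻¹ : ℝ) * x ^ 2)
      = (2⁻¹ : ℝ) ^ (-(2 + 1) / 2 : ℝ) * (1 / 2) * Real.Gamma ((2 + 1) / 2) := by
    rw [← integral_rpow_mul_exp_neg_mul_rpow (p := 2) (q := 2) (by norm_num) (by norm_num)
      (by norm_num : (0:ℝ) < 2⁻¹)]
    refine setIntegral_congr_fun measurableSet_Ioi fun x hx => ?_
    rw [show ((2:ℝ)) = ((2:ℕ) : ℝ) by norm_num]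
    norm_num [Real.rpow_natCast]
  have hGamma : Real.Gamma ((2 + 1) / 2) = Real.sqrt Real.pi / 2 := by
    rw [show ((2:ℝ) + 1) / 2 = 1/2 + 1 by norm_num, Real.Gamma_add_one (by norm_num),
      Real.Gamma_one_half_eq]
    ring
  have hpow : (2⁻¹ : ℝ) ^ (-(2 + 1) / 2 : ℝ) = 2 * Real.sqrt 2 := by
    rw [show (-(2 + 1) / 2 : ℝ) = -(3/2) by norm_num, Real.rpow_neg (by norm_num),
      Real.inv_rpow (by norm_num), inv_inv,
      show (3/2 : ℝ) = 1 + 1/2 by norm_num, Real.rpow_add (by norm_num), Real.rpow_one,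
      ← Real.sqrt_eq_rpow]
  rw [habs, hIoi, hGamma, hpow, Real.sqrt_mul (by norm_num)]
  ring

lemma std_moment2 : ∫ x, x ^ 2 ∂(gaussianReal 0 1) = 1 := by
  rw [integral_gaussianReal_eq one_ne_zero]
  have : (fun x : ℝ => gaussianPDFReal 0 1 x * x ^ 2)
      = fun x => (Real.sqrt (2 * Real.pi))⁻¹ * (x ^ 2 * Real.exp (-(2⁻¹ : ℝ) * x ^ 2)) := by
    funext x; rw [gaussianPDFReal_std]; ring
  rw [this, integral_const_mul, integral_sq_exp,
    inv_mul_cancel₀ (Real.sqrt_ne_zero'.2 (by positivity))]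

lemma gaussianReal_eq_map (m : ℝ) (s : ℝ≥0) :
    gaussianReal m (s ^ 2) = (gaussianReal 0 1).map (fun x => (s : ℝ) * x + m) := by
  have h1 : (gaussianReal 0 1).map (fun x : ℝ => (s : ℝ) * x)
      = gaussianReal 0 (s ^ 2) := by
    rw [gaussianReal_map_const_mul]
    congr 1
    · ring
    · ext
      simp [NNReal.coe_pow]
  have h2 : ((gaussianReal 0 1).map (fun x : ℝ => (s : ℝ) * x)).map (fun x : ℝ => x + m)
      = gaussianReal m (s ^ 2) := by
    rw [h1, gaussianReal_map_add_const, zero_add]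
  rw [← h2, Measure.map_map (measurable_add_const m) (measurable_const_mul _)]
  rfl

lemma gauss_memL2 (m : ℝ) (s : ℝ≥0) : MemLp (id : ℝ → ℝ) 2 (gaussianReal m (s ^ 2)) := by
  rw [gaussianReal_eq_map m s,
    memLp_map_measure_iff measurable_id.aestronglyMeasurable
      (((measurable_const_mul _).add_const m).aemeasurable)]
  exact ((std_memL2.const_mul _).add (memLp_const m))

lemma gauss_mean (m : ℝ) (s : ℝ≥0) : ∫ x, x ∂(gaussianReal m (s ^ 2)) = m := by
  rw [gaussianReal_eq_map m s,
    integral_map ((measurable_const_mul _).add_const m).aemeasurable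
      measurable_id'.aestronglyMeasurable]
  have hint : Integrable (fun x : ℝ => x) (gaussianReal 0 1) :=
    std_memL2.integrable one_le_two
  rw [integral_add ((hint.const_mul _)) (integrable_const m), integral_const_mul, std_mean,
    integral_const]
  simp

lemma gauss_moment2c (m : ℝ) (s : ℝ≥0) :
    ∫ x, (x - m) ^ 2 ∂(gaussianReal m (s ^ 2)) = (s : ℝ) ^ 2 := by
  rw [gaussianReal_eq_map m s,
    integral_map ((measurable_const_mul _).add_const m).aemeasurable
      (((measurable_id'.sub_const m).pow_const 2) :
        Measurable fun x : ℝ => (x - m) ^ 2).aestronglyMeasurable]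
  have : (fun x : ℝ => ((s : ℝ) * x + m - m) ^ 2) = fun x : ℝ => (s : ℝ) ^ 2 * x ^ 2 := by
    funext x; ring
  simp only [this]
  rw [integral_const_mul, std_moment2, mul_one]

section Expand

variable {α : Type*} [MeasurableSpace α] {P : Measure α} [IsFiniteMeasure P] {A B : α → ℝ}

lemma integrable_mul_of_memL2 (hA : MemLp A 2 P) (hB : MemLp B 2 P) :
    Integrable (fun x => A x * B x) P := by
  have h : (fun x => A x * B x)
      = fun x => ((A x + B x) ^ 2 - A x ^ 2 - B x ^ 2) / 2 := by
    funext x; ring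
  rw [h]
  exact (((hA.add hB).integrable_sq.sub hA.integrable_sq).sub hB.integrable_sq).div_const 2

lemma integral_expand_sq (hA : MemLp A 2 P) (hB : MemLp B 2 P) (p q r : ℝ) :
    ∫ x, (p * A x + q * B x + r) ^ 2 ∂P
      = p ^ 2 * ∫ x, A x ^ 2 ∂P + q ^ 2 * ∫ x, B x ^ 2 ∂P
        + 2 * p * q * ∫ x, A x * B x ∂P + 2 * p * r * ∫ x, A x ∂P
        + 2 * q * r * ∫ x, B x ∂P + r ^ 2 * (P Set.univ).toReal := by
  have iA : Integrable A P := hA.integrable one_le_two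
  have iB : Integrable B P := hB.integrable one_le_two
  have iA2 : Integrable (fun x => A x ^ 2) P := hA.integrable_sq
  have iB2 : Integrable (fun x => B x ^ 2) P := hB.integrable_sq
  have iAB : Integrable (fun x => A x * B x) P := integrable_mul_of_memL2 hA hB
  have e : (fun x => (p * A x + q * B x + r) ^ 2)
      = fun x => p ^ 2 * A x ^ 2 + (q ^ 2 * B x ^ 2 + (2 * p * q * (A x * B x)
          + (2 * p * r * A x + (2 * q * r * B x + r ^ 2)))) := by
    funext x; ring
  have i5 : Integrable (fun x => 2 * q * r * B x + r ^ 2) P :=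
    (iB.const_mul _).add (integrable_const _)
  have i4 : Integrable (fun x => 2 * p * r * A x + (2 * q * r * B x + r ^ 2)) P :=
    (iA.const_mul _).add i5
  have i3 : Integrable (fun x => 2 * p * q * (A x * B x)
      + (2 * p * r * A x + (2 * q * r * B x + r ^ 2))) P := (iAB.const_mul _).add i4
  have i2 : Integrable (fun x => q ^ 2 * B x ^ 2 + (2 * p * q * (A x * B x)
      + (2 * p * r * A x + (2 * q * r * B x + r ^ 2)))) P := (iB2.const_mul _).add i3
  rw [e, integral_add (iA2.const_mul _) i2, integral_add (iB2.const_mul _) i3,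
    integral_add (iAB.const_mul _) i4, integral_add (iA.const_mul _) i5,
    integral_add (iB.const_mul _) (integrable_const _),
    integral_const_mul, integral_const_mul, integral_const_mul, integral_const_mul,
    integral_const_mul, integral_const]
  simp only [smul_eq_mul, measureReal_def]
  ring

lemma integral_mul_le_of_int_sq (hA : MemLp A 2 P) (hB : MemLp B 2 P) {a b : ℝ}
    (ha : 0 < a) (hb : 0 < b)
    (hA2 : ∫ x, A x ^ 2 ∂P = a ^ 2) (hB2 : ∫ x, B x ^ 2 ∂P = b ^ 2) :
    ∫ x, A x * B x ∂P ≤ a * b := by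
  set t : ℝ := b / a with ht
  have h0 : 0 ≤ ∫ x, (t * A x + (-1) * B x + 0) ^ 2 ∂P :=
    integral_nonneg fun x => sq_nonneg _
  rw [integral_expand_sq hA hB, hA2, hB2] at h0
  have htpos : 0 < t := div_pos hb ha
  have key : t ^ 2 * a ^ 2 = b ^ 2 := by
    rw [ht, div_pow, div_mul_cancel₀ _ (pow_ne_zero 2 ha.ne')]
  have h1 : (∫ x, A x * B x ∂P) * t ≤ b ^ 2 := by nlinarith
  calc ∫ x, A x * B x ∂P ≤ b ^ 2 / t := (le_div_iff₀ htpos).mpr h1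
    _ = a * b := by rw [ht]; field_simp

end Expand

lemma nnnorm_sq_eq_ofReal (a : ℝ) : ((‖a‖₊ : ℝ≥0∞)) ^ 2 = ENNReal.ofReal (a ^ 2) := by
  rw [← enorm_eq_nnnorm, ← ofReal_norm_eq_enorm, ← ENNReal.ofReal_pow (norm_nonneg a), Real.norm_eq_abs,
    sq_abs]

lemma W2_lower (m₁ m₂ : ℝ) (s₁ s₂ : ℝ≥0) (hs₁ : 0 < s₁) (hs₂ : 0 < s₂)
    (P : Measure (ℝ × ℝ)) (h1 : P.map Prod.fst = gaussianReal m₁ (s₁ ^ 2))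
    (h2 : P.map Prod.snd = gaussianReal m₂ (s₂ ^ 2)) :
    ENNReal.ofReal ((m₁ - m₂) ^ 2 + ((s₁ : ℝ) - (s₂ : ℝ)) ^ 2)
      ≤ ∫⁻ p, (‖p.1 - p.2‖₊ : ℝ≥0∞) ^ 2 ∂P := by
  haveI : IsProbabilityMeasure P := by
    constructor
    have : (P.map Prod.fst) Set.univ = 1 := by
      rw [h1]; exact measure_univ
    rwa [Measure.map_apply measurable_fst MeasurableSet.univ, Set.preimage_univ] at this
  -- L2 membership of the coordinates
  have hX2 : MemLp (fun p : ℝ × ℝ => p.1) 2 P := by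
    have h := gauss_memL2 m₁ s₁
    rw [← h1] at h
    exact (memLp_map_measure_iff measurable_id.aestronglyMeasurable
      measurable_fst.aemeasurable).1 h
  have hY2 : MemLp (fun p : ℝ × ℝ => p.2) 2 P := by
    have h := gauss_memL2 m₂ s₂
    rw [← h2] at h
    exact (memLp_map_measure_iff measurable_id.aestronglyMeasurable
      measurable_snd.aemeasurable).1 h
  have hA : MemLp (fun p : ℝ × ℝ => p.1 - m₁) 2 P := hX2.sub (memLp_const m₁)
  have hB : MemLp (fun p : ℝ × ℝ => p.2 - m₂) 2 P := hY2.sub (memLp_const m₂)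
  -- moments
  have hXint : Integrable (fun p : ℝ × ℝ => p.1) P := hX2.integrable one_le_two
  have hYint : Integrable (fun p : ℝ × ℝ => p.2) P := hY2.integrable one_le_two
  have hXmean : ∫ p, (p : ℝ × ℝ).1 ∂P = m₁ := by
    have := gauss_mean m₁ s₁
    rw [← h1, integral_map measurable_fst.aemeasurable
      measurable_id'.aestronglyMeasurable] at this
    exact this
  have hYmean : ∫ p, (p : ℝ × ℝ).2 ∂P = m₂ := by
    have := gauss_mean m₂ s₂
    rw [← h2, integral_map measurable_snd.aemeasurable
      measurable_id'.aestronglyMeasurable] at this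
    exact this
  have hAmean : ∫ p, ((p : ℝ × ℝ).1 - m₁) ∂P = 0 := by
    rw [integral_sub hXint (integrable_const m₁), hXmean, integral_const]
    simp
  have hBmean : ∫ p, ((p : ℝ × ℝ).2 - m₂) ∂P = 0 := by
    rw [integral_sub hYint (integrable_const m₂), hYmean, integral_const]
    simp
  have hA2 : ∫ p, ((p : ℝ × ℝ).1 - m₁) ^ 2 ∂P = (s₁ : ℝ) ^ 2 := by
    have := gauss_moment2c m₁ s₁
    rw [← h1, integral_map measurable_fst.aemeasurable
      ((measurable_id'.sub_const m₁).pow_const 2).aestronglyMeasurable] at this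
    exact this
  have hB2 : ∫ p, ((p : ℝ × ℝ).2 - m₂) ^ 2 ∂P = (s₂ : ℝ) ^ 2 := by
    have := gauss_moment2c m₂ s₂
    rw [← h2, integral_map measurable_snd.aemeasurable
      ((measurable_id'.sub_const m₂).pow_const 2).aestronglyMeasurable] at this
    exact this
  have hCS : ∫ p, ((p : ℝ × ℝ).1 - m₁) * ((p : ℝ × ℝ).2 - m₂) ∂P ≤ (s₁ : ℝ) * s₂ :=
    integral_mul_le_of_int_sq hA hB hs₁ hs₂ hA2 hB2
  -- the expected squared distance
  have hdiff2 : MemLp (fun p : ℝ × ℝ => p.1 - p.2) 2 P := hX2.sub hY2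
  have hint : Integrable (fun p : ℝ × ℝ => (p.1 - p.2) ^ 2) P := hdiff2.integrable_sq
  have hexp : ∫ p, ((p : ℝ × ℝ).1 - p.2) ^ 2 ∂P
      = (s₁ : ℝ) ^ 2 + (s₂ : ℝ) ^ 2
        - 2 * ∫ p, ((p : ℝ × ℝ).1 - m₁) * ((p : ℝ × ℝ).2 - m₂) ∂P + (m₁ - m₂) ^ 2 := by
    have e : (fun p : ℝ × ℝ => (p.1 - p.2) ^ 2)
        = fun p : ℝ × ℝ =>
          (1 * (p.1 - m₁) + (-1) * (p.2 - m₂) + (m₁ - m₂)) ^ 2 := by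
      funext p; ring
    rw [e, integral_expand_sq hA hB, hA2, hB2, hAmean, hBmean, measure_univ]
    simp only [ENNReal.toReal_one]
    ring
  have hreal : (m₁ - m₂) ^ 2 + ((s₁ : ℝ) - (s₂ : ℝ)) ^ 2
      ≤ ∫ p, ((p : ℝ × ℝ).1 - p.2) ^ 2 ∂P := by
    rw [hexp]; nlinarith [hCS]
  calc ENNReal.ofReal ((m₁ - m₂) ^ 2 + ((s₁ : ℝ) - (s₂ : ℝ)) ^ 2)
      ≤ ENNReal.ofReal (∫ p, ((p : ℝ × ℝ).1 - p.2) ^ 2 ∂P) := ENNReal.ofReal_le_ofReal hreal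
    _ = ∫⁻ p, (‖p.1 - p.2‖₊ : ℝ≥0∞) ^ 2 ∂P := by
        rw [ofReal_integral_eq_lintegral_ofReal hint
          (Filter.Eventually.of_forall fun p => sq_nonneg _)]
        simp only [nnnorm_sq_eq_ofReal]

lemma W2_upper (m₁ m₂ : ℝ) (s₁ s₂ : ℝ≥0) (hs₁ : 0 < s₁) (hs₂ : 0 < s₂) :
    ∃ P : Measure (ℝ × ℝ), (P.map Prod.fst = gaussianReal m₁ (s₁ ^ 2)
        ∧ P.map Prod.snd = gaussianReal m₂ (s₂ ^ 2))
      ∧ ∫⁻ p, (‖p.1 - p.2‖₊ : ℝ≥0∞) ^ 2 ∂P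
          = ENNReal.ofReal ((m₁ - m₂) ^ 2 + ((s₁ : ℝ) - (s₂ : ℝ)) ^ 2) := by
  set μ := gaussianReal m₁ (s₁ ^ 2) with hμ
  set c : ℝ := (s₂ : ℝ) / (s₁ : ℝ) with hc
  have hs₁' : (s₁ : ℝ) ≠ 0 := ne_of_gt hs₁
  have hT : Measurable (fun x : ℝ => (x, c * (x - m₁) + m₂)) :=
    measurable_id.prodMk (((measurable_id.sub_const m₁).const_mul c).add_const m₂)
  refine ⟨μ.map (fun x => (x, c * (x - m₁) + m₂)), ⟨?_, ?_⟩, ?_⟩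
  · rw [Measure.map_map measurable_fst hT]
    exact Measure.map_id
  · rw [Measure.map_map measurable_snd hT]
    have hcomp : (Prod.snd ∘ fun x : ℝ => (x, c * (x - m₁) + m₂))
        = (fun x : ℝ => x + (m₂ - c * m₁)) ∘ (fun x : ℝ => c * x) := by
      funext x; simp only [Function.comp_apply]; ring
    have hvar : (NNReal.mk (c ^ 2) (sq_nonneg _) * s₁ ^ 2 : ℝ≥0) = s₂ ^ 2 := by
      apply NNReal.coe_injective
      push_cast
      show c ^ 2 * (s₁ : ℝ) ^ 2 = (s₂ : ℝ) ^ 2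
      rw [hc, div_pow, div_mul_cancel₀ _ (pow_ne_zero 2 hs₁')]
    have hmean : c * m₁ + (m₂ - c * m₁) = m₂ := by ring
    rw [hcomp, ← Measure.map_map (measurable_add_const _) (measurable_const_mul _), hμ,
      gaussianReal_map_const_mul, hvar, gaussianReal_map_add_const, hmean]
  · rw [lintegral_map (show Measurable fun p : ℝ × ℝ => (‖p.1 - p.2‖₊ : ℝ≥0∞) ^ 2 from
        ((measurable_fst.sub measurable_snd).nnnorm.coe_nnreal_ennreal).pow_const 2)
      hT]
    have hA : MemLp (fun x : ℝ => x - m₁) 2 μ := (gauss_memL2 m₁ s₁).sub (memLp_const m₁)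
    have e : (fun x : ℝ => ((x, c * (x - m₁) + m₂).1 - (x, c * (x - m₁) + m₂).2) ^ 2)
        = fun x : ℝ => ((1 - c) * (x - m₁) + 0 * (x - m₁) + (m₁ - m₂)) ^ 2 := by
      funext x; ring
    have hAmean : ∫ x, (x - m₁) ∂μ = 0 := by
      have hXint : Integrable (fun x : ℝ => x) μ := (gauss_memL2 m₁ s₁).integrable one_le_two
      rw [integral_sub hXint (integrable_const m₁), gauss_mean, integral_const]
      simp
    have hint : Integrable
        (fun x : ℝ => ((x, c * (x - m₁) + m₂).1 - (x, c * (x - m₁) + m₂).2) ^ 2) μ := by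
      rw [e]
      exact (((hA.const_mul (1 - c)).add (hA.const_mul 0)).add (memLp_const _)).integrable_sq
    have hval : ∫ x, ((x, c * (x - m₁) + m₂).1 - (x, c * (x - m₁) + m₂).2) ^ 2 ∂μ
        = (m₁ - m₂) ^ 2 + ((s₁ : ℝ) - (s₂ : ℝ)) ^ 2 := by
      rw [e, integral_expand_sq hA hA, gauss_moment2c, hAmean, measure_univ]
      simp only [ENNReal.toReal_one]
      have : (1 - c) ^ 2 * (s₁ : ℝ) ^ 2 = ((s₁ : ℝ) - (s₂ : ℝ)) ^ 2 := by
        rw [hc]; field_simp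
      rw [this]; ring
    have : ∀ x : ℝ, (‖(x, c * (x - m₁) + m₂).1 - (x, c * (x - m₁) + m₂).2‖₊ : ℝ≥0∞) ^ 2
        = ENNReal.ofReal (((x, c * (x - m₁) + m₂).1 - (x, c * (x - m₁) + m₂).2) ^ 2) :=
      fun x => nnnorm_sq_eq_ofReal _
    simp only [this]
    rw [← ofReal_integral_eq_lintegral_ofReal hint
      (Filter.Eventually.of_forall fun x => sq_nonneg _), hval]

/-- The squared 2-Wasserstein distance on `ℝ`: infimum over couplings of the expected
squared distance. -/
noncomputable def W2sqReal (μ ν : Measure ℝ) : ℝ≥0∞ :=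
  ⨅ (π : Measure (ℝ × ℝ)) (_ : π.map Prod.fst = μ ∧ π.map Prod.snd = ν),
    ∫⁻ p, (‖p.1 - p.2‖₊ : ℝ≥0∞) ^ 2 ∂π

/-- For univariate Gaussians `N(m₁, s₁²)` and `N(m₂, s₂²)` with `s₁, s₂ > 0`, the
squared 2-Wasserstein distance equals `(m₁ − m₂)² + (s₁ − s₂)²`. -/
theorem W2sq_gaussian (m₁ m₂ : ℝ) (s₁ s₂ : ℝ≥0) (hs₁ : 0 < s₁) (hs₂ : 0 < s₂) :
    W2sqReal (gaussianReal m₁ (s₁ ^ 2)) (gaussianReal m₂ (s₂ ^ 2)) =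
      ENNReal.ofReal ((m₁ - m₂) ^ 2 + ((s₁ : ℝ) - (s₂ : ℝ)) ^ 2) := by
  apply le_antisymm
  · obtain ⟨P, hP, hcost⟩ := W2_upper m₁ m₂ s₁ s₂ hs₁ hs₂
    rw [W2sqReal]
    exact iInf_le_of_le P (iInf_le_of_le hP (le_of_eq hcost))
  · rw [W2sqReal]
    exact le_iInf fun P => le_iInf fun hP => W2_lower m₁ m₂ s₁ s₂ hs₁ hs₂ P hP.1 hP.2
end
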